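/- Suppose f ∈ C²(ℝ^d) and α > 0. For (x₀, ω) ∈ Θ and t ∈ ℕ, let I_t(x₀, ω) = 1 if |e_{i_t}ᵀ ∇f(x_t(ω))| ≥ (1/√d) ‖∇f(x_t(ω))‖ and I_t(x₀, ω) = 0 otherwise. Then the set Θ₁ := {(x₀, ω) ∈ Θ : liminf_{t→∞} (1/t) Σ_{s=0}^{t−1} I_s(x₀, ω) ≥ 1/d} satisfies μ(Θ \ Θ₁) = 0. -/

import Mathlib

open MeasureTheory Filter Topology

noncomputable section

/-- Iterates of randomized coordinate gradient descent with step size `α`: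
`x_{t+1} = x_t - α e_{i_t} ∂_{i_t} f(x_t)`. -/
def rcgdIter (d : ℕ) (f : EuclideanSpace ℝ (Fin d) → ℝ) (α : ℝ)
    (x₀ : EuclideanSpace ℝ (Fin d)) (ω : ℕ → Fin d) : ℕ → EuclideanSpace ℝ (Fin d)
  | 0 => x₀
  | t + 1 =>
      rcgdIter d f α x₀ ω t -
        (α * gradient f (rcgdIter d f α x₀ ω t) (ω t)) • EuclideanSpace.single (ω t) (1 : ℝ)

/-- The indicator `I_t(x₀, ω)`, equal to `1` when the sampled coordinate of the gradient at the
`t`-th iterate is at least `(1/√d) ‖∇f(x_t)‖` in absolute value, and `0` otherwise. -/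
def goodStepIndicator (d : ℕ) (f : EuclideanSpace ℝ (Fin d) → ℝ) (α : ℝ)
    (x₀ : EuclideanSpace ℝ (Fin d)) (ω : ℕ → Fin d) (t : ℕ) : ℝ :=
  if (1 / Real.sqrt d) * ‖gradient f (rcgdIter d f α x₀ ω t)‖ ≤
      |gradient f (rcgdIter d f α x₀ ω t) (ω t)| then 1 else 0

namespace RcgdAux

variable {d : ℕ} (f : EuclideanSpace ℝ (Fin d) → ℝ) (α : ℝ)

/-- Indicator, as a function of a point `x` and a coordinate `j`. -/
def indVal (x : EuclideanSpace ℝ (Fin d)) (j : Fin d) : ℝ :=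
  if (1 / Real.sqrt d) * ‖gradient f x‖ ≤ |gradient f x j| then 1 else 0

/-- Conditional probability of a good step at `x`. -/
def pVal (x : EuclideanSpace ℝ (Fin d)) : ℝ := (d : ℝ)⁻¹ * ∑ j, indVal f x j

/-- Centered increment. -/
def Dfun (x₀ : EuclideanSpace ℝ (Fin d)) (ω : ℕ → Fin d) (t : ℕ) : ℝ :=
  goodStepIndicator d f α x₀ ω t - pVal f (rcgdIter d f α x₀ ω t)

/-- Centered partial sums (a martingale). -/
def Mfun (x₀ : EuclideanSpace ℝ (Fin d)) (ω : ℕ → Fin d) (t : ℕ) : ℝ :=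
  ∑ s ∈ Finset.range t, Dfun f α x₀ ω s

lemma goodStep_eq (x₀ ω t) :
    goodStepIndicator d f α x₀ ω t = indVal f (rcgdIter d f α x₀ ω t) (ω t) := rfl

lemma indVal_nonneg (x j) : 0 ≤ indVal f x j := by
  unfold indVal; split <;> norm_num

lemma indVal_le_one (x j) : indVal f x j ≤ 1 := by
  unfold indVal; split <;> norm_num

lemma one_le_sum_indVal (hd : 1 ≤ d) (x) : 1 ≤ ∑ j, indVal f x j := by
  haveI : Nonempty (Fin d) := ⟨⟨0, hd⟩⟩
  obtain ⟨j₀, -, hj₀⟩ := Finset.exists_max_image Finset.univ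
    (fun j => |gradient f x j|) ⟨⟨0, hd⟩, Finset.mem_univ _⟩
  have hdr : (0:ℝ) < Real.sqrt d := Real.sqrt_pos.2 (by exact_mod_cast hd)
  have hnorm : ‖gradient f x‖ ≤ Real.sqrt d * |gradient f x j₀| := by
    rw [EuclideanSpace.norm_eq]
    have h1 : ∑ i, ‖gradient f x i‖ ^ 2 ≤ (d:ℝ) * |gradient f x j₀| ^ 2 := by
      calc ∑ i, ‖gradient f x i‖ ^ 2 ≤ ∑ _i : Fin d, |gradient f x j₀| ^ 2 := by
            refine Finset.sum_le_sum fun i _ => ?_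
            rw [Real.norm_eq_abs]
            exact pow_le_pow_left₀ (abs_nonneg _) (hj₀ i (Finset.mem_univ i)) 2
        _ = (d:ℝ) * |gradient f x j₀| ^ 2 := by
            rw [Finset.sum_const, Finset.card_univ, Fintype.card_fin, nsmul_eq_mul]
    calc Real.sqrt (∑ i, ‖gradient f x i‖ ^ 2) ≤ Real.sqrt ((d:ℝ) * |gradient f x j₀| ^ 2) :=
          Real.sqrt_le_sqrt h1
      _ = Real.sqrt d * |gradient f x j₀| := by
          rw [Real.sqrt_mul (by positivity), Real.sqrt_sq (abs_nonneg _)]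
  have hind : indVal f x j₀ = 1 := by
    unfold indVal
    rw [if_pos]
    rw [div_mul_eq_mul_div, one_mul, div_le_iff₀ hdr, mul_comm]
    exact hnorm
  calc (1:ℝ) = indVal f x j₀ := hind.symm
    _ ≤ ∑ j, indVal f x j :=
        Finset.single_le_sum (fun j _ => indVal_nonneg f x j) (Finset.mem_univ j₀)

lemma inv_le_pVal (hd : 1 ≤ d) (x) : (d : ℝ)⁻¹ ≤ pVal f x := by
  have h := one_le_sum_indVal f hd x
  have hd0 : (0:ℝ) < (d:ℝ)⁻¹ := by positivity
  calc (d:ℝ)⁻¹ = (d:ℝ)⁻¹ * 1 := by ring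
    _ ≤ (d:ℝ)⁻¹ * ∑ j, indVal f x j := by nlinarith
    _ = pVal f x := rfl

lemma pVal_nonneg (x) : 0 ≤ pVal f x := by
  have : (0:ℝ) ≤ ∑ j, indVal f x j :=
    Finset.sum_nonneg fun j _ => indVal_nonneg f x j
  have : (0:ℝ) ≤ (d:ℝ)⁻¹ := by positivity
  unfold pVal; positivity

lemma pVal_le_one (hd : 1 ≤ d) (x) : pVal f x ≤ 1 := by
  have hsum : ∑ j, indVal f x j ≤ (d:ℝ) := by
    calc ∑ j, indVal f x j ≤ ∑ _j : Fin d, (1:ℝ) :=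
          Finset.sum_le_sum fun j _ => indVal_le_one f x j
      _ = (d:ℝ) := by simp
  have hd0 : (0:ℝ) < (d:ℝ) := by exact_mod_cast hd
  unfold pVal
  rw [inv_mul_le_iff₀ hd0, mul_one]
  exact hsum

lemma abs_Dfun_le_one (hd : 1 ≤ d) (x₀ ω t) : |Dfun f α x₀ ω t| ≤ 1 := by
  unfold Dfun
  rw [goodStep_eq]
  set x := rcgdIter d f α x₀ ω t
  have h1 := indVal_nonneg f x (ω t)
  have h2 := indVal_le_one f x (ω t)
  have h3 := pVal_nonneg f x
  have h4 := pVal_le_one f hd x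
  rw [abs_le]; constructor <;> linarith

lemma rcgdIter_congr (x₀) {ω ω' : ℕ → Fin d} {t : ℕ} (h : ∀ k < t, ω k = ω' k) :
    rcgdIter d f α x₀ ω t = rcgdIter d f α x₀ ω' t := by
  induction t with
  | zero => rfl
  | succ t ih =>
    have h1 : ∀ k < t, ω k = ω' k := fun k hk => h k (Nat.lt_succ_of_lt hk)
    have ht : ω t = ω' t := h t (Nat.lt_succ_self t)
    simp only [rcgdIter]
    rw [ih h1, ht]

lemma Dfun_congr (x₀) {ω ω' : ℕ → Fin d} {t : ℕ} (h : ∀ k < t + 1, ω k = ω' k) :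
    Dfun f α x₀ ω t = Dfun f α x₀ ω' t := by
  have hx : rcgdIter d f α x₀ ω t = rcgdIter d f α x₀ ω' t :=
    rcgdIter_congr f α x₀ (fun k hk => h k (Nat.lt_succ_of_lt hk))
  have ht : ω t = ω' t := h t (Nat.lt_succ_self t)
  unfold Dfun
  rw [goodStep_eq, goodStep_eq, hx, ht]

lemma Mfun_congr (x₀) {ω ω' : ℕ → Fin d} {t : ℕ} (h : ∀ k < t, ω k = ω' k) :
    Mfun f α x₀ ω t = Mfun f α x₀ ω' t := by
  unfold Mfun
  refine Finset.sum_congr rfl fun s hs => ?_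
  exact Dfun_congr f α x₀ fun k hk =>
    h k (lt_of_lt_of_le hk (Nat.succ_le_of_lt (Finset.mem_range.1 hs)))

/-- Padding a finite word to an infinite one. -/
def padf (i0 : Fin d) {n : ℕ} (v : Fin n → Fin d) (k : ℕ) : Fin d :=
  if h : k < n then v ⟨k, h⟩ else i0

lemma padf_snoc_lt (i0 : Fin d) {t : ℕ} (w : Fin t → Fin d) (j : Fin d)
    {k : ℕ} (hk : k < t) : padf i0 (Fin.snoc w j) k = padf i0 w k := by
  have hk' : k < t + 1 := Nat.lt_succ_of_lt hk
  simp only [padf, dif_pos hk, dif_pos hk']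
  simp [Fin.snoc, hk]

lemma padf_snoc_last (i0 : Fin d) {t : ℕ} (w : Fin t → Fin d) (j : Fin d) :
    padf i0 (Fin.snoc w j) t = j := by
  simp only [padf, dif_pos (Nat.lt_succ_self t)]
  simp [Fin.snoc]

/-- Second moment bound: the sum over all words of length `t` of the squared
martingale value is at most `t * d^t`. -/
lemma sum_sq_Mfun_le (hd : 1 ≤ d) (x₀) (i0 : Fin d) (t : ℕ) :
    ∑ v : Fin t → Fin d, (Mfun f α x₀ (padf i0 v) t) ^ 2 ≤ (t : ℝ) * (d : ℝ) ^ t := by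
  have hd0 : (0:ℝ) < (d:ℝ) := by exact_mod_cast hd
  induction t with
  | zero => simp [Mfun]
  | succ t ih =>
    have hsplit : ∑ v : Fin (t+1) → Fin d, (Mfun f α x₀ (padf i0 v) (t+1)) ^ 2
        = ∑ j : Fin d, ∑ w : Fin t → Fin d,
            (Mfun f α x₀ (padf i0 (Fin.snoc w j)) (t+1)) ^ 2 := by
      have h1 : ∑ p : Fin d × (Fin t → Fin d),
            (Mfun f α x₀ (padf i0 (Fin.snoc p.2 p.1)) (t+1)) ^ 2
          = ∑ v : Fin (t+1) → Fin d, (Mfun f α x₀ (padf i0 v) (t+1)) ^ 2 :=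
        Fintype.sum_equiv (Fin.snocEquiv fun _ => Fin d)
          (fun p => (Mfun f α x₀ (padf i0 (Fin.snoc p.2 p.1)) (t+1)) ^ 2)
          (fun v => (Mfun f α x₀ (padf i0 v) (t+1)) ^ 2) (fun p => rfl)
      have h2 : ∑ p : Fin d × (Fin t → Fin d),
            (Mfun f α x₀ (padf i0 (Fin.snoc p.2 p.1)) (t+1)) ^ 2
          = ∑ j : Fin d, ∑ w : Fin t → Fin d,
              (Mfun f α x₀ (padf i0 (Fin.snoc w j)) (t+1)) ^ 2 :=
        Fintype.sum_prod_type _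
      rw [← h1, h2]
    rw [hsplit, Finset.sum_comm]
    have hterm : ∀ (w : Fin t → Fin d) (j : Fin d),
        Mfun f α x₀ (padf i0 (Fin.snoc w j)) (t+1)
          = Mfun f α x₀ (padf i0 w) t
            + (indVal f (rcgdIter d f α x₀ (padf i0 w) t) j
               - pVal f (rcgdIter d f α x₀ (padf i0 w) t)) := by
      intro w j
      have hlow : ∀ k < t, padf i0 (Fin.snoc w j) k = padf i0 w k :=
        fun k hk => padf_snoc_lt i0 w j hk
      have hx : rcgdIter d f α x₀ (padf i0 (Fin.snoc w j)) t
          = rcgdIter d f α x₀ (padf i0 w) t := rcgdIter_congr f α x₀ hlow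
      unfold Mfun
      rw [Finset.sum_range_succ]
      congr 1
      · exact Finset.sum_congr rfl fun s hs =>
          Dfun_congr f α x₀ fun k hk =>
            hlow k (lt_of_lt_of_le hk (Nat.succ_le_of_lt (Finset.mem_range.1 hs)))
      · unfold Dfun
        rw [goodStep_eq, hx, padf_snoc_last]
    have hinner : ∀ w : Fin t → Fin d,
        ∑ j : Fin d, (Mfun f α x₀ (padf i0 (Fin.snoc w j)) (t+1)) ^ 2
          ≤ (d:ℝ) * (Mfun f α x₀ (padf i0 w) t) ^ 2 + (d:ℝ) := by
      intro w
      set a := Mfun f α x₀ (padf i0 w) t with ha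
      set xw := rcgdIter d f α x₀ (padf i0 w) t with hxw
      set c : Fin d → ℝ := fun j => indVal f xw j - pVal f xw with hc
      have hre : ∀ j : Fin d,
          (Mfun f α x₀ (padf i0 (Fin.snoc w j)) (t+1)) ^ 2
            = a ^ 2 + 2 * a * c j + (c j) ^ 2 := by
        intro j; rw [hterm w j]; ring
      have hsumc : ∑ j, c j = 0 := by
        have : ∑ j : Fin d, pVal f xw = (d:ℝ) * pVal f xw := by
          rw [Finset.sum_const, Finset.card_univ, Fintype.card_fin, nsmul_eq_mul]
        rw [hc]
        rw [Finset.sum_sub_distrib, this]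
        unfold pVal
        field_simp
        ring
      have hsumc2 : ∑ j, (c j) ^ 2 ≤ (d:ℝ) := by
        calc ∑ j, (c j) ^ 2 ≤ ∑ _j : Fin d, (1:ℝ) := by
              refine Finset.sum_le_sum fun j _ => ?_
              have h1 := indVal_nonneg f xw j
              have h2 := indVal_le_one f xw j
              have h3 := pVal_nonneg f xw
              have h4 := pVal_le_one f hd xw
              have : |c j| ≤ 1 := by rw [hc, abs_le]; constructor <;> simp <;> linarith
              calc (c j)^2 = |c j|^2 := (sq_abs _).symm
                _ ≤ 1^2 := pow_le_pow_left₀ (abs_nonneg _) this 2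
                _ = 1 := one_pow 2
          _ = (d:ℝ) := by simp
      calc ∑ j : Fin d, (Mfun f α x₀ (padf i0 (Fin.snoc w j)) (t+1)) ^ 2
          = ∑ j : Fin d, (a ^ 2 + 2 * a * c j + (c j) ^ 2) :=
            Finset.sum_congr rfl fun j _ => hre j
        _ = (d:ℝ) * a ^ 2 + 2 * a * (∑ j, c j) + ∑ j, (c j) ^ 2 := by
            rw [Finset.sum_add_distrib, Finset.sum_add_distrib, Finset.sum_const,
              Finset.card_univ, Fintype.card_fin, nsmul_eq_mul, ← Finset.mul_sum]
        _ = (d:ℝ) * a ^ 2 + ∑ j, (c j) ^ 2 := by rw [hsumc]; ring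
        _ ≤ (d:ℝ) * a ^ 2 + (d:ℝ) := by linarith
    calc ∑ w : Fin t → Fin d, ∑ j : Fin d,
          (Mfun f α x₀ (padf i0 (Fin.snoc w j)) (t+1)) ^ 2
        ≤ ∑ w : Fin t → Fin d,
            ((d:ℝ) * (Mfun f α x₀ (padf i0 w) t) ^ 2 + (d:ℝ)) :=
          Finset.sum_le_sum fun w _ => hinner w
      _ = (d:ℝ) * (∑ w : Fin t → Fin d, (Mfun f α x₀ (padf i0 w) t) ^ 2)
            + (d:ℝ)^t * (d:ℝ) := by
          rw [Finset.sum_add_distrib, Finset.sum_const, Finset.card_univ,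
            ← Finset.mul_sum]
          simp only [Fintype.card_fun, Fintype.card_fin, nsmul_eq_mul]
          push_cast
          ring
      _ ≤ (d:ℝ) * ((t:ℝ) * (d:ℝ)^t) + (d:ℝ)^t * (d:ℝ) := by nlinarith [pow_pos hd0 t]
      _ = ((t+1 : ℕ) : ℝ) * (d:ℝ) ^ (t+1) := by push_cast; ring


lemma abs_Mfun_sub_le (hd : 1 ≤ d) (x₀ ω) {a b : ℕ} (hab : a ≤ b) :
    |Mfun f α x₀ ω b - Mfun f α x₀ ω a| ≤ (b:ℝ) - (a:ℝ) := by
  unfold Mfun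
  rw [← Finset.sum_Ico_eq_sub _ hab]
  calc |∑ s ∈ Finset.Ico a b, Dfun f α x₀ ω s|
      ≤ ∑ s ∈ Finset.Ico a b, |Dfun f α x₀ ω s| := Finset.abs_sum_le_sum_abs _ _
    _ ≤ ∑ _s ∈ Finset.Ico a b, (1:ℝ) :=
        Finset.sum_le_sum fun s _ => abs_Dfun_le_one f α hd x₀ ω s
    _ = ((b - a : ℕ) : ℝ) := by simp
    _ = (b:ℝ) - (a:ℝ) := by rw [Nat.cast_sub hab]

/-- Chebyshev-type bound via cylinder counting. -/
lemma meas_abs_Mfun_ge (hd : 1 ≤ d) (ℙ : Measure (ℕ → Fin d))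
    (hℙ : ∀ (n : ℕ) (js : Fin n → Fin d),
      ℙ {ω | ∀ k : Fin n, ω (k : ℕ) = js k} = (1 / (d : ENNReal)) ^ n)
    (x₀) {t : ℕ} {ε : ℝ} (hε : 0 < ε) :
    ℙ {ω | ε ≤ |Mfun f α x₀ ω t|} ≤ ENNReal.ofReal ((t:ℝ) / ε ^ 2) := by
  classical
  have hd0 : (0:ℝ) < (d:ℝ) := by exact_mod_cast hd
  set i0 : Fin d := ⟨0, hd⟩
  set S : Finset (Fin t → Fin d) :=
    Finset.univ.filter (fun v => ε ≤ |Mfun f α x₀ (padf i0 v) t|) with hS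
  have hsub : {ω : ℕ → Fin d | ε ≤ |Mfun f α x₀ ω t|}
      ⊆ ⋃ v ∈ S, {ω : ℕ → Fin d | ∀ k : Fin t, ω (k : ℕ) = v k} := by
    intro ω hω
    set v : Fin t → Fin d := fun k => ω (k : ℕ) with hv
    have hagree : ∀ k < t, padf i0 v k = ω k := by
      intro k hk; simp only [padf, dif_pos hk]; rfl
    have hMv : Mfun f α x₀ (padf i0 v) t = Mfun f α x₀ ω t :=
      Mfun_congr f α x₀ hagree
    have hvS : v ∈ S := by
      rw [hS, Finset.mem_filter]
      exact ⟨Finset.mem_univ _, by rw [hMv]; exact hω⟩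
    exact Set.mem_biUnion hvS (fun k => rfl)
  have hcard : (S.card : ℝ) * ε ^ 2 ≤ (t:ℝ) * (d:ℝ) ^ t := by
    calc (S.card : ℝ) * ε ^ 2 = ∑ _v ∈ S, ε ^ 2 := by
          rw [Finset.sum_const, nsmul_eq_mul]
      _ ≤ ∑ v ∈ S, (Mfun f α x₀ (padf i0 v) t) ^ 2 := by
          refine Finset.sum_le_sum fun v hv => ?_
          have h1 : ε ≤ |Mfun f α x₀ (padf i0 v) t| := (Finset.mem_filter.1 hv).2
          calc ε ^ 2 ≤ |Mfun f α x₀ (padf i0 v) t| ^ 2 :=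
                pow_le_pow_left₀ hε.le h1 2
            _ = (Mfun f α x₀ (padf i0 v) t) ^ 2 := sq_abs _
      _ ≤ ∑ v : Fin t → Fin d, (Mfun f α x₀ (padf i0 v) t) ^ 2 :=
          Finset.sum_le_sum_of_subset_of_nonneg (Finset.subset_univ S)
            (fun v _ _ => sq_nonneg _)
      _ ≤ (t:ℝ) * (d:ℝ) ^ t := sum_sq_Mfun_le f α hd x₀ i0 t
  calc ℙ {ω | ε ≤ |Mfun f α x₀ ω t|}
      ≤ ℙ (⋃ v ∈ S, {ω : ℕ → Fin d | ∀ k : Fin t, ω (k : ℕ) = v k}) :=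
        measure_mono hsub
    _ ≤ ∑ v ∈ S, ℙ {ω : ℕ → Fin d | ∀ k : Fin t, ω (k : ℕ) = v k} :=
        measure_biUnion_finset_le _ _
    _ = S.card * (1 / (d : ENNReal)) ^ t := by
        rw [Finset.sum_congr rfl fun v _ => hℙ t v, Finset.sum_const, nsmul_eq_mul]
    _ ≤ ENNReal.ofReal ((t:ℝ) / ε ^ 2) := by
        have hcyl : (1 / (d : ENNReal)) ^ t = ENNReal.ofReal ((1 / (d:ℝ)) ^ t) := by
          rw [ENNReal.ofReal_pow (by positivity), ENNReal.ofReal_div_of_pos hd0,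
            ENNReal.ofReal_one, ENNReal.ofReal_natCast]
        rw [hcyl, ← ENNReal.ofReal_natCast S.card,
          ← ENNReal.ofReal_mul (by positivity)]
        apply ENNReal.ofReal_le_ofReal
        have h2 : (S.card : ℝ) ≤ (t:ℝ) * (d:ℝ)^t / ε^2 := by
          rw [le_div_iff₀ (by positivity)]; exact hcard
        calc (S.card : ℝ) * (1/(d:ℝ))^t
            ≤ ((t:ℝ) * (d:ℝ)^t / ε^2) * (1/(d:ℝ))^t :=
              mul_le_mul_of_nonneg_right h2 (by positivity)
          _ = (t:ℝ) / ε^2 := by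
              rw [one_div, inv_pow, div_mul_eq_mul_div, mul_assoc,
                mul_inv_cancel₀ (pow_pos hd0 t).ne', mul_one]

lemma growth_le (hd : 1 ≤ d) (x₀ ω) (t : ℕ) :
    (t:ℝ) * (d:ℝ)⁻¹ + Mfun f α x₀ ω t
      ≤ ∑ s ∈ Finset.range t, goodStepIndicator d f α x₀ ω s := by
  have hterm : ∀ s, (d:ℝ)⁻¹ + Dfun f α x₀ ω s ≤ goodStepIndicator d f α x₀ ω s := by
    intro s
    have := inv_le_pVal f hd (rcgdIter d f α x₀ ω s)
    unfold Dfun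
    linarith
  calc (t:ℝ) * (d:ℝ)⁻¹ + Mfun f α x₀ ω t
      = ∑ s ∈ Finset.range t, ((d:ℝ)⁻¹ + Dfun f α x₀ ω s) := by
        rw [Finset.sum_add_distrib, Finset.sum_const, Finset.card_range, nsmul_eq_mul]
        unfold Mfun
        ring
    _ ≤ ∑ s ∈ Finset.range t, goodStepIndicator d f α x₀ ω s :=
        Finset.sum_le_sum fun s _ => hterm s

lemma goodStep_le_one (x₀ ω t) : goodStepIndicator d f α x₀ ω t ≤ 1 := by
  unfold goodStepIndicator; split <;> norm_num

lemma goodStep_nonneg (x₀ ω t) : 0 ≤ goodStepIndicator d f α x₀ ω t := by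
  unfold goodStepIndicator; split <;> norm_num

lemma endgame (hd : 1 ≤ d) (x₀) (ω : ℕ → Fin d)
    (h : ∀ m : ℕ, ∀ᶠ k in atTop,
        ¬ ((((k+1)^2 : ℕ) : ℝ) / ((m:ℝ)+1) ≤ |Mfun f α x₀ ω ((k+1)^2)|)) :
    1 / (d:ℝ) ≤ liminf (fun t : ℕ => (t:ℝ)⁻¹ *
        ∑ s ∈ Finset.range t, goodStepIndicator d f α x₀ ω s) atTop := by
  set u : ℕ → ℝ := fun t => (t:ℝ)⁻¹ *
      ∑ s ∈ Finset.range t, goodStepIndicator d f α x₀ ω s with hu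
  have hu1 : ∀ t, u t ≤ 1 := by
    intro t
    rcases Nat.eq_zero_or_pos t with ht | ht
    · simp [hu, ht]
    · have htr : (0:ℝ) < (t:ℝ) := by exact_mod_cast ht
      have hsum : ∑ s ∈ Finset.range t, goodStepIndicator d f α x₀ ω s ≤ (t:ℝ) := by
        calc ∑ s ∈ Finset.range t, goodStepIndicator d f α x₀ ω s
            ≤ ∑ _s ∈ Finset.range t, (1:ℝ) :=
              Finset.sum_le_sum fun s _ => goodStep_le_one f α x₀ ω s
          _ = (t:ℝ) := by simp
      rw [hu]
      calc (t:ℝ)⁻¹ * ∑ s ∈ Finset.range t, goodStepIndicator d f α x₀ ω s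
          ≤ (t:ℝ)⁻¹ * (t:ℝ) := by
            apply mul_le_mul_of_nonneg_left hsum (by positivity)
        _ = 1 := by field_simp
  have hcb : IsCoboundedUnder (· ≥ ·) atTop u :=
    IsBoundedUnder.isCoboundedUnder_ge ⟨1, eventually_map.2 (Eventually.of_forall hu1)⟩
  have key : ∀ ε : ℝ, 0 < ε → ∀ᶠ t : ℕ in atTop, 1/(d:ℝ) - ε ≤ u t := by
    intro ε hε
    obtain ⟨m, hm⟩ := exists_nat_one_div_lt (show (0:ℝ) < ε/2 by linarith)
    obtain ⟨K, hK⟩ := (h m).exists_forall_of_atTop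
    set L : ℕ := ⌈4/ε⌉₊ + 1 with hL
    set N : ℕ := (max (K+1) (max L 1))^2 with hN
    filter_upwards [eventually_ge_atTop N] with t ht
    set k : ℕ := Nat.sqrt t with hk
    have hkmax : max (K+1) (max L 1) ≤ k := by
      rw [hk, Nat.le_sqrt]
      calc max (K+1) (max L 1) * max (K+1) (max L 1) = N := by rw [hN]; ring
        _ ≤ t := ht
    have hkK : K + 1 ≤ k := le_trans (le_max_left _ _) hkmax
    have hkL : L ≤ k := le_trans (le_max_left _ _) (le_trans (le_max_right _ _) hkmax)
    have hk1 : 1 ≤ k := le_trans (le_max_right _ _) (le_trans (le_max_right _ _) hkmax)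
    have hk2t : k^2 ≤ t := Nat.sqrt_le' t
    have htk2 : t ≤ k^2 + 2*k := by
      have := Nat.lt_succ_sqrt' t
      rw [← hk] at this
      nlinarith [this]
    have hMk : |Mfun f α x₀ ω (k^2)| < ((k^2 : ℕ) : ℝ) / ((m:ℝ)+1) := by
      have h1 := hK (k - 1) (by omega)
      rw [not_le] at h1
      have : k - 1 + 1 = k := by omega
      rw [this] at h1
      exact h1
    have htpos : 0 < t := by
      calc 0 < 1^2 := by norm_num
        _ ≤ k^2 := Nat.pow_le_pow_left hk1 2
        _ ≤ t := hk2t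
    have htr : (0:ℝ) < (t:ℝ) := by exact_mod_cast htpos
    set kr : ℝ := (k:ℝ) with hkr
    have hkr0 : (0:ℝ) < kr := by rw [hkr]; exact_mod_cast hk1
    have h1r : kr^2 ≤ (t:ℝ) := by
      rw [hkr, ← Nat.cast_pow]; exact_mod_cast hk2t
    have h2r : (t:ℝ) ≤ kr^2 + 2*kr := by
      rw [hkr]
      calc (t:ℝ) ≤ ((k^2 + 2*k : ℕ) : ℝ) := by exact_mod_cast htk2
        _ = (k:ℝ)^2 + 2*(k:ℝ) := by push_cast; ring
    have habs : |Mfun f α x₀ ω t - Mfun f α x₀ ω (k^2)| ≤ (t:ℝ) - kr^2 := by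
      have := abs_Mfun_sub_le f α hd x₀ ω hk2t
      rw [hkr, ← Nat.cast_pow]
      exact this
    have hMkr : |Mfun f α x₀ ω (k^2)| < kr^2 * (1/((m:ℝ)+1)) := by
      have : ((k^2 : ℕ) : ℝ) = kr^2 := by rw [hkr]; push_cast; ring
      rw [this] at hMk
      calc |Mfun f α x₀ ω (k^2)| < kr^2 / ((m:ℝ)+1) := hMk
        _ = kr^2 * (1/((m:ℝ)+1)) := by ring
    have hLr : 4/ε ≤ (L:ℝ) := by
      rw [hL]
      push_cast
      calc 4/ε ≤ (⌈4/ε⌉₊ : ℝ) := Nat.le_ceil _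
        _ ≤ (⌈4/ε⌉₊ : ℝ) + 1 := by linarith
    have hkLr : (L:ℝ) ≤ kr := by rw [hkr]; exact_mod_cast hkL
    have h2k : 2*kr ≤ (ε/2) * (t:ℝ) := by
      have ha : (4/ε) * kr ≤ kr * kr :=
        mul_le_mul_of_nonneg_right (hLr.trans hkLr) hkr0.le
      have hb : kr * kr ≤ (t:ℝ) := by nlinarith
      have hc : (ε/2) * ((4/ε) * kr) ≤ (ε/2) * (t:ℝ) :=
        mul_le_mul_of_nonneg_left (ha.trans hb) (by positivity)
      have hd' : (ε/2) * ((4/ε) * kr) = 2 * kr := by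
        field_simp
        ring
      linarith
    have hMklt : |Mfun f α x₀ ω (k^2)| ≤ (ε/2) * (t:ℝ) := by
      have : kr^2 * (1/((m:ℝ)+1)) ≤ kr^2 * (ε/2) := by
        apply mul_le_mul_of_nonneg_left hm.le (by positivity)
      nlinarith
    have hMt : -(ε * (t:ℝ)) ≤ Mfun f α x₀ ω t := by
      have h3 := (abs_le.1 habs).1
      have h4 := (abs_le.1 hMklt).1
      linarith
    have hsum : (1/(d:ℝ) - ε) * (t:ℝ)
        ≤ ∑ s ∈ Finset.range t, goodStepIndicator d f α x₀ ω s := by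
      have := growth_le f α hd x₀ ω t
      have hdd : (1:ℝ)/(d:ℝ) = (d:ℝ)⁻¹ := one_div _
      nlinarith
    show 1/(d:ℝ) - ε ≤ (t:ℝ)⁻¹ * ∑ s ∈ Finset.range t, goodStepIndicator d f α x₀ ω s
    have : 1/(d:ℝ) - ε ≤ (t:ℝ)⁻¹ * ((1/(d:ℝ) - ε) * (t:ℝ)) := by
      rw [mul_comm, mul_assoc, mul_inv_cancel₀ htr.ne', mul_one]
    calc 1/(d:ℝ) - ε ≤ (t:ℝ)⁻¹ * ((1/(d:ℝ) - ε) * (t:ℝ)) := this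
      _ ≤ (t:ℝ)⁻¹ * ∑ s ∈ Finset.range t, goodStepIndicator d f α x₀ ω s :=
          mul_le_mul_of_nonneg_left hsum (by positivity)
  have hlim : ∀ ε : ℝ, 0 < ε → 1/(d:ℝ) - ε ≤ liminf u atTop :=
    fun ε hε => le_liminf_of_le hcb (key ε hε)
  refine le_of_forall_pos_le_add fun ε hε => ?_
  linarith [hlim ε hε]

lemma slice_null (hd : 1 ≤ d) (ℙ : Measure (ℕ → Fin d))
    (hℙ : ∀ (n : ℕ) (js : Fin n → Fin d),
      ℙ {ω | ∀ k : Fin n, ω (k : ℕ) = js k} = (1 / (d : ENNReal)) ^ n)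
    (x₀) :
    ℙ {ω : ℕ → Fin d | ¬ 1/(d:ℝ) ≤ liminf (fun t : ℕ => (t:ℝ)⁻¹ *
        ∑ s ∈ Finset.range t, goodStepIndicator d f α x₀ ω s) atTop} = 0 := by
  have hA : ∀ m : ℕ, ℙ {ω : ℕ → Fin d | ∃ᶠ k in atTop,
      (((k+1)^2 : ℕ) : ℝ) / ((m:ℝ)+1) ≤ |Mfun f α x₀ ω ((k+1)^2)|} = 0 := by
    intro m
    apply measure_setOf_frequently_eq_zero
    have hbound : ∀ k : ℕ,
        ℙ {ω | (((k+1)^2:ℕ):ℝ)/((m:ℝ)+1) ≤ |Mfun f α x₀ ω ((k+1)^2)|}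
        ≤ ENNReal.ofReal (((m:ℝ)+1)^2 * (1/((k:ℝ)+1)^2)) := by
      intro k
      have hT : (((k+1)^2:ℕ):ℝ) = ((k:ℝ)+1)^2 := by push_cast; ring
      have hε : (0:ℝ) < (((k+1)^2:ℕ):ℝ)/((m:ℝ)+1) := by
        rw [hT]; positivity
      refine (meas_abs_Mfun_ge f α hd ℙ hℙ x₀ hε).trans ?_
      apply ENNReal.ofReal_le_ofReal
      apply le_of_eq
      rw [hT]
      have h1 : ((k:ℝ)+1) ≠ 0 := by positivity
      have h2 : ((m:ℝ)+1) ≠ 0 := by positivity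
      field_simp
    have hsummable : Summable (fun k : ℕ => ((m:ℝ)+1)^2 * (1/((k:ℝ)+1)^2)) := by
      apply Summable.mul_left
      have h0 : Summable (fun n : ℕ => 1/(n:ℝ)^2) :=
        Real.summable_one_div_nat_pow.2 (by norm_num)
      have h1 := (summable_nat_add_iff 1).2 h0
      apply h1.congr
      intro k
      push_cast
      ring
    have hne : (∑' k : ℕ, ENNReal.ofReal (((m:ℝ)+1)^2 * (1/((k:ℝ)+1)^2))) ≠ ⊤ := by
      rw [← ENNReal.ofReal_tsum_of_nonneg (fun k => by positivity) hsummable]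
      exact ENNReal.ofReal_ne_top
    exact ne_top_of_le_ne_top hne (ENNReal.tsum_le_tsum hbound)
  have hsub : {ω : ℕ → Fin d | ¬ 1/(d:ℝ) ≤ liminf (fun t : ℕ => (t:ℝ)⁻¹ *
        ∑ s ∈ Finset.range t, goodStepIndicator d f α x₀ ω s) atTop}
      ⊆ ⋃ m : ℕ, {ω : ℕ → Fin d | ∃ᶠ k in atTop,
        (((k+1)^2 : ℕ) : ℝ) / ((m:ℝ)+1) ≤ |Mfun f α x₀ ω ((k+1)^2)|} := by
    intro ω hω
    by_contra hc
    simp only [Set.mem_iUnion, Set.mem_setOf_eq, not_exists] at hc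
    exact hω (endgame f α hd x₀ ω (fun m => not_frequently.1 (hc m)))
  exact measure_mono_null hsub (measure_iUnion_null hA)

end RcgdAux

set_option maxHeartbeats 1000000 in
open RcgdAux in
/-- The set `Θ₁` of pairs `(x₀, ω)` along which the good steps have lower asymptotic
frequency at least `1/d` is of full `μ = Leb × ℙ` measure. -/
theorem rcgd_good_steps_frequency
    {d : ℕ} (hd : 1 ≤ d) (f : EuclideanSpace ℝ (Fin d) → ℝ) (α : ℝ)
    (hf : ContDiff ℝ 2 f) (hα : 0 < α)
    (ℙ : Measure (ℕ → Fin d))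
    (hℙ : ∀ (n : ℕ) (js : Fin n → Fin d),
      ℙ {ω | ∀ k : Fin n, ω (k : ℕ) = js k} = (1 / (d : ENNReal)) ^ n) :
    ((volume : Measure (EuclideanSpace ℝ (Fin d))).prod ℙ)
      {p : EuclideanSpace ℝ (Fin d) × (ℕ → Fin d) |
        ¬ (1 / (d : ℝ)) ≤ liminf (fun t : ℕ => (t : ℝ)⁻¹ *
            ∑ s ∈ Finset.range t, goodStepIndicator d f α p.1 p.2 s) atTop} = 0 := by
  haveI : IsProbabilityMeasure ℙ := by
    constructor
    have h0 := hℙ 0 (fun k => k.elim0)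
    have huniv : {ω : ℕ → Fin d | ∀ k : Fin 0, ω (k : ℕ) = (fun k : Fin 0 => k.elim0) k}
        = Set.univ := Set.eq_univ_of_forall (fun ω k => k.elim0)
    rw [huniv] at h0
    simpa using h0
  -- continuity of the gradient
  have hgrad : Continuous fun x : EuclideanSpace ℝ (Fin d) => gradient f x := by
    have h1 : Continuous (fderiv ℝ f) := hf.continuous_fderiv (by norm_num)
    exact ((InnerProductSpace.toDual ℝ
      (EuclideanSpace ℝ (Fin d))).symm.continuous.comp h1 : _)
  have hgradj : ∀ j : Fin d, Continuous fun x : EuclideanSpace ℝ (Fin d) =>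
      gradient f x j :=
    fun j => (EuclideanSpace.proj j).continuous.comp hgrad
  -- measurability of the iterates
  have hx : ∀ t, Measurable fun p : EuclideanSpace ℝ (Fin d) × (ℕ → Fin d) =>
      rcgdIter d f α p.1 p.2 t := by
    intro t
    induction t with
    | zero => exact measurable_fst
    | succ t ih =>
      have hstep : Measurable fun q : EuclideanSpace ℝ (Fin d) × Fin d =>
          q.1 - (α * gradient f q.1 q.2) • EuclideanSpace.single q.2 (1:ℝ) := by
        apply measurable_from_prod_countable_left
        intro i
        have : Continuous fun x : EuclideanSpace ℝ (Fin d) =>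
            x - (α * gradient f x i) • EuclideanSpace.single i (1:ℝ) :=
          continuous_id.sub (((continuous_const.mul (hgradj i)).smul continuous_const))
        exact this.measurable
      have : (fun p : EuclideanSpace ℝ (Fin d) × (ℕ → Fin d) =>
          rcgdIter d f α p.1 p.2 (t+1))
          = fun p => (fun q : EuclideanSpace ℝ (Fin d) × Fin d =>
              q.1 - (α * gradient f q.1 q.2) • EuclideanSpace.single q.2 (1:ℝ))
              (rcgdIter d f α p.1 p.2 t, p.2 t) := by
        funext p
        simp only [rcgdIter]
      rw [this]
      exact hstep.comp (ih.prodMk ((measurable_pi_apply t).comp measurable_snd))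
  -- measurability of the indicators
  have hind : Measurable fun q : EuclideanSpace ℝ (Fin d) × Fin d =>
      indVal f q.1 q.2 := by
    apply measurable_from_prod_countable_left
    intro i
    have hset : MeasurableSet {x : EuclideanSpace ℝ (Fin d) |
        (1 / Real.sqrt d) * ‖gradient f x‖ ≤ |gradient f x i|} :=
      (isClosed_le (continuous_const.mul hgrad.norm) (hgradj i).abs).measurableSet
    exact Measurable.ite hset measurable_const measurable_const
  have hXs : ∀ s, Measurable fun p : EuclideanSpace ℝ (Fin d) × (ℕ → Fin d) =>
      goodStepIndicator d f α p.1 p.2 s := by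
    intro s
    have h2 : Measurable fun p : EuclideanSpace ℝ (Fin d) × (ℕ → Fin d) =>
        (rcgdIter d f α p.1 p.2 s, p.2 s) :=
      (hx s).prodMk ((measurable_pi_apply s).comp measurable_snd)
    have h3 := hind.comp h2
    simp only [goodStep_eq f α]
    exact h3
  have hF : ∀ t : ℕ, Measurable fun p : EuclideanSpace ℝ (Fin d) × (ℕ → Fin d) =>
      (t:ℝ)⁻¹ * ∑ s ∈ Finset.range t, goodStepIndicator d f α p.1 p.2 s :=
    fun t => measurable_const.mul (Finset.measurable_sum _ fun s _ => hXs s)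
  have hL : Measurable fun p : EuclideanSpace ℝ (Fin d) × (ℕ → Fin d) =>
      liminf (fun t : ℕ => (t:ℝ)⁻¹ *
        ∑ s ∈ Finset.range t, goodStepIndicator d f α p.1 p.2 s) atTop :=
    Measurable.liminf hF
  have hBeq : {p : EuclideanSpace ℝ (Fin d) × (ℕ → Fin d) |
        ¬ (1 / (d : ℝ)) ≤ liminf (fun t : ℕ => (t : ℝ)⁻¹ *
            ∑ s ∈ Finset.range t, goodStepIndicator d f α p.1 p.2 s) atTop}
      = (fun p : EuclideanSpace ℝ (Fin d) × (ℕ → Fin d) =>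
          liminf (fun t : ℕ => (t:ℝ)⁻¹ *
            ∑ s ∈ Finset.range t, goodStepIndicator d f α p.1 p.2 s) atTop)
        ⁻¹' (Set.Iio (1/(d:ℝ))) := by
    ext p
    simp [not_le]
  rw [hBeq, Measure.prod_apply (hL measurableSet_Iio)]
  have hzero : ∀ x : EuclideanSpace ℝ (Fin d),
      ℙ (Prod.mk x ⁻¹' ((fun p : EuclideanSpace ℝ (Fin d) × (ℕ → Fin d) =>
          liminf (fun t : ℕ => (t:ℝ)⁻¹ *
            ∑ s ∈ Finset.range t, goodStepIndicator d f α p.1 p.2 s) atTop)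
        ⁻¹' (Set.Iio (1/(d:ℝ))))) = 0 := by
    intro x
    have := slice_null f α hd ℙ hℙ x
    convert this using 2
    ext ω
    simp [not_le]
  simp only [hzero]
  simp
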